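/- There exists a square-summable sequence θ that does not satisfy the polished tail condition for any choice of constants N₀, L₀, ρ; for example θ_j = 2^{-k} when j = 2^{2^k} for some k ∈ ℕ and θ_j = 0 otherwise. -/

import Mathlib

/-- Tail sum `∑_{j ≥ N} θ_j²`. -/
noncomputable def tailSum (θ : ℕ → ℝ) (N : ℕ) : ℝ :=
  ∑' j : ℕ, if N ≤ j then θ j ^ 2 else 0

/-- Block sum `∑_{j = N}^{ρN} θ_j²`. -/
noncomputable def blockSum (θ : ℕ → ℝ) (N ρ : ℕ) : ℝ :=
  ∑ j ∈ Finset.Icc N (ρ * N), θ j ^ 2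

/-- Polished tail condition with constants `N₀, L₀, ρ`. -/
def PolishedTail (θ : ℕ → ℝ) (N₀ : ℕ) (L₀ : ℝ) (ρ : ℕ) : Prop :=
  ∀ N : ℕ, N₀ < N → tailSum θ N ≤ L₀ * blockSum θ N ρ

/-- The support points `2^(2^k)`. -/
def nn (k : ℕ) : ℕ := 2 ^ (2 ^ k)

lemma nn_strictMono : StrictMono nn := fun a b h =>
  Nat.pow_lt_pow_right one_lt_two (Nat.pow_lt_pow_right one_lt_two h)

lemma nn_inj : Function.Injective nn := nn_strictMono.injective

open scoped Classical in
/-- The counterexample sequence. -/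
noncomputable def th (j : ℕ) : ℝ :=
  if h : ∃ k, nn k = j then (2 : ℝ)⁻¹ ^ h.choose else 0

lemma th_nn (k : ℕ) : th (nn k) = (2 : ℝ)⁻¹ ^ k := by
  have h : ∃ m, nn m = nn k := ⟨k, rfl⟩
  have hc : h.choose = k := nn_inj h.choose_spec
  unfold th
  rw [dif_pos h, hc]

lemma th_zero {j : ℕ} (h : ∀ k, nn k ≠ j) : th j = 0 := by
  unfold th
  rw [dif_neg]; push_neg; exact h

lemma nn_succ (k : ℕ) : nn (k + 1) = nn k ^ 2 := by
  simp [nn, pow_succ, pow_mul]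

lemma th_sq_summable : Summable fun j => th j ^ 2 := by
  rw [← (Function.Injective.summable_iff nn_inj ?_ :
      Summable ((fun j => th j ^ 2) ∘ nn) ↔ _)]
  · have : ((fun j => th j ^ 2) ∘ nn) = fun k => ((2 : ℝ)⁻¹ ^ 2) ^ k := by
      funext k
      simp [th_nn, ← pow_mul, mul_comm]
    rw [this]
    exact summable_geometric_of_lt_one (by positivity) (by norm_num)
  · intro j hj
    have : ∀ k, nn k ≠ j := fun k hk => hj ⟨k, hk⟩
    simp [th_zero this]

theorem stmt_3 :
    ∃ θ : ℕ → ℝ, (Summable fun j => θ j ^ 2) ∧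
      ∀ (N₀ ρ : ℕ) (L₀ : ℝ), 0 < L₀ → 2 ≤ ρ → ¬ PolishedTail θ N₀ L₀ ρ := by
  refine ⟨th, th_sq_summable, fun N₀ ρ L₀ hL hρ hPT => ?_⟩
  -- pick k large
  set k := max N₀ (2 * ρ) + 1 with hk
  have hklt : max N₀ (2 * ρ) < k := Nat.lt_succ_self _
  have hnk_big : max N₀ (2 * ρ) < nn k := by
    calc max N₀ (2 * ρ) < k := hklt
    _ < 2 ^ k := Nat.lt_two_pow_self (n := k)
    _ ≤ 2 ^ (2 ^ k) := Nat.pow_le_pow_right (by norm_num) (Nat.le_of_lt (Nat.lt_two_pow_self (n := k)))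
  have hN₀ : N₀ < nn k := lt_of_le_of_lt (le_max_left _ _) hnk_big
  have hρk : 2 * ρ < nn k := lt_of_le_of_lt (le_max_right _ _) hnk_big
  set a := nn k with ha
  have ha1 : 1 ≤ a := by omega
  set N := a + 1 with hN
  -- the block sum is zero
  have hblock : blockSum th N ρ = 0 := by
    apply Finset.sum_eq_zero
    intro j hj
    rw [Finset.mem_Icc] at hj
    have : th j = 0 := by
      apply th_zero
      intro m hm
      rcases lt_or_ge m (k + 1) with hmk | hmk
      · have : nn m ≤ a := by
          rcases Nat.lt_succ_iff_lt_or_eq.mp hmk with h | h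
          · exact le_of_lt (nn_strictMono h)
          · rw [h]
        omega
      · have h1 : nn (k + 1) ≤ nn m := nn_strictMono.monotone hmk
        rw [nn_succ, ← ha] at h1
        have h2 : ρ * N < a ^ 2 := by nlinarith
        omega
    simp [this]
  -- the tail sum is positive
  have hmem : N ≤ nn (k + 1) := by
    rw [nn_succ]; nlinarith
  have hfsum : Summable fun j => if N ≤ j then th j ^ 2 else 0 := by
    apply Summable.of_nonneg_of_le (fun j => ?_) (fun j => ?_) th_sq_summable
    · split <;> positivity
    · split
      · exact le_rfl
      · positivity
  have htail : ((2 : ℝ)⁻¹ ^ (k + 1)) ^ 2 ≤ tailSum th N := by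
    have := Summable.le_tsum hfsum (nn (k + 1)) (fun j _ => by split <;> positivity)
    simpa [tailSum, if_pos hmem, th_nn] using this
  have hle := hPT N (by omega)
  rw [hblock, mul_zero] at hle
  have : (0 : ℝ) < ((2 : ℝ)⁻¹ ^ (k + 1)) ^ 2 := by positivity
  linarith
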